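/- Let H be a finite group and p a prime such that the only normal p-subgroup of H is the trivial subgroup. Let M be a p-local subgroup of H that is maximal with respect to inclusion among all p-local subgroups of H. Then there exists a nontrivial p-subgroup R of H such that M = N_H(R), R is normal in M, and every normal p-subgroup of M is contained in R (so R is the largest normal p-subgroup of its own normalizer, i.e. R is a radical p-subgroup of H). -/

import Mathlib

/-- If `H` is a finite group with no nontrivial normal `p`-subgroup, then any
maximal `p`-local subgroup `M` of `H` is the normalizer of a radical `p`-subgroup `R`:
`R` is a nontrivial `p`-subgroup with `M = N_H(R)`, `R` is normal in `M`, and every normal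
`p`-subgroup of `M` is contained in `R`. -/
theorem maximal_p_local_is_normalizer_of_radical
    (p : ℕ) [Fact p.Prime] (H : Type*) [Group H] [Finite H]
    (hO : ∀ Q : Subgroup H, Q.Normal → IsPGroup p Q → Q = ⊥)
    (M : Subgroup H)
    (hM : ∃ Q : Subgroup H, Q ≠ ⊥ ∧ IsPGroup p Q ∧ M = Subgroup.normalizer (Q : Set H))
    (hmax : ∀ M' : Subgroup H,
      (∃ Q : Subgroup H, Q ≠ ⊥ ∧ IsPGroup p Q ∧ M' = Subgroup.normalizer (Q : Set H)) → M ≤ M' → M' = M) :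
    ∃ R : Subgroup H, R ≠ ⊥ ∧ IsPGroup p R ∧ M = Subgroup.normalizer (R : Set H) ∧
      (R.subgroupOf M).Normal ∧
      ∀ S : Subgroup ↥M, S.Normal → IsPGroup p S → S ≤ R.subgroupOf M := by
  classical
  obtain ⟨Q, hQne, hQp, hMQ⟩ := hM
  have hQM : Q ≤ M := hMQ ▸ Subgroup.le_normalizer
  -- the collection of normal p-subgroups of M
  set 𝒮 : Set (Subgroup ↥M) := {N | N.Normal ∧ IsPGroup p N} with h𝒮
  set R₀ : Subgroup ↥M := sSup 𝒮 with hR₀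
  -- Q.subgroupOf M ∈ 𝒮
  have hQ𝒮 : Q.subgroupOf M ∈ 𝒮 := by
    constructor
    · rw [hMQ]; exact Subgroup.normal_in_normalizer
    · exact hQp.of_equiv (Subgroup.subgroupOfEquivOfLe hQM).symm
  -- every member of 𝒮 is contained in any Sylow p-subgroup of M
  obtain ⟨P⟩ : Nonempty (Sylow p ↥M) := inferInstance
  have hle : ∀ N ∈ 𝒮, N ≤ (P : Subgroup ↥M) := by
    rintro N ⟨hN, hNp⟩
    obtain ⟨P', hP'⟩ := hNp.exists_le_sylow
    obtain ⟨g, hg⟩ := MulAction.exists_smul_eq (↥M) P' P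
    rw [← hg, Sylow.coe_subgroup_smul]
    intro x hx
    have : g⁻¹ * x * g ∈ N := by
      have := hN.conj_mem x hx g⁻¹
      simpa [mul_assoc] using this
    refine ⟨g⁻¹ * x * g, hP' this, ?_⟩
    simp [MulAut.conj, mul_assoc]
  have hR₀p : IsPGroup p R₀ := P.2.to_le (sSup_le hle)
  have hR₀n : R₀.Normal := by
    constructor
    intro n hn g
    have hmap : ∀ N ∈ 𝒮, Subgroup.map (MulAut.conj g).toMonoidHom N = N := by
      rintro N ⟨hN, -⟩
      have := @Subgroup.Normal.conj_smul_eq_self _ _ g N hN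
      rwa [Subgroup.pointwise_smul_def] at this
    have hmaple : Subgroup.map (MulAut.conj g).toMonoidHom R₀ ≤ R₀ := by
      rw [Subgroup.map_le_iff_le_comap]
      refine sSup_le fun N hN => ?_
      rw [← Subgroup.map_le_iff_le_comap, hmap N hN]
      exact le_sSup hN
    exact hmaple ⟨n, hn, rfl⟩
  -- the candidate R
  refine ⟨R₀.map M.subtype, ?_, hR₀p.map _, ?_, ?_, ?_⟩
  · -- nontrivial
    intro hbot
    apply hQne
    have hQle : Q ≤ R₀.map M.subtype := by
      have : (Q.subgroupOf M).map M.subtype = Q ⊓ M := Subgroup.subgroupOf_map_subtype Q M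
      rw [inf_of_le_left hQM] at this
      rw [← this]
      exact Subgroup.map_mono (le_sSup hQ𝒮)
    rw [hbot] at hQle
    exact le_bot_iff.mp hQle
  · -- M = normalizer
    have hMle : M ≤ Subgroup.normalizer ((R₀.map M.subtype : Subgroup H) : Set H) := by
      intro m hm
      rw [Subgroup.mem_normalizer_iff]
      have key : ∀ m' : ↥M, ∀ h ∈ R₀.map M.subtype,
          (m' : H) * h * (m' : H)⁻¹ ∈ R₀.map M.subtype := by
        rintro m' h ⟨x, hx, rfl⟩
        exact ⟨m' * x * m'⁻¹, hR₀n.conj_mem x hx m', rfl⟩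
      intro h
      constructor
      · exact fun hh => key ⟨m, hm⟩ h hh
      · intro hh
        have := key ⟨m, hm⟩⁻¹ _ hh
        simpa [mul_assoc] using this
    have := hmax (Subgroup.normalizer ((R₀.map M.subtype : Subgroup H) : Set H))
      ⟨R₀.map M.subtype, ?_, hR₀p.map _, rfl⟩ hMle
    · exact this.symm
    · intro hbot
      apply hQne
      have hQle : Q ≤ R₀.map M.subtype := by
        have : (Q.subgroupOf M).map M.subtype = Q ⊓ M := Subgroup.subgroupOf_map_subtype Q M
        rw [inf_of_le_left hQM] at this
        rw [← this]
        exact Subgroup.map_mono (le_sSup hQ𝒮)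
      rw [hbot] at hQle
      exact le_bot_iff.mp hQle
  · -- normality of R.subgroupOf M
    have : (R₀.map M.subtype).subgroupOf M = R₀ :=
      Subgroup.comap_map_eq_self_of_injective M.subtype_injective R₀
    rw [this]
    exact hR₀n
  · -- maximality
    intro S hSn hSp
    have : (R₀.map M.subtype).subgroupOf M = R₀ :=
      Subgroup.comap_map_eq_self_of_injective M.subtype_injective R₀
    rw [this]
    exact le_sSup ⟨hSn, hSp⟩
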